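/- arXiv:0903.3618 — 2 statements merged into one kernel-verified Lean document; each statement's English description precedes it below -/
import Mathlib

section
/- Let F₁ = z + z·w + w² and F₂ = z + 2·z·w + 3·w² in ℂ[z,w], and let Φ = z² + 2zw. If G₁, G₂ are polynomials such that F₁·G₁ + F₂·G₂ = Φ, then deg(F₁·G₁) ≥ 3 or deg(F₂·G₂) ≥ 3. -/
open MvPolynomial

lemma aux_degree_eq_td {σ R : Type*} [CommSemiring R] {p : MvPolynomial σ R} (hp : p ≠ 0) :
    ∃ d ∈ p.support, Finsupp.degree d = p.totalDegree := by
  classical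
  obtain ⟨d, hd, h⟩ := Finset.exists_mem_eq_sup p.support (support_nonempty.mpr hp)
    (fun m : σ →₀ ℕ => m.sum fun _ e => e)
  refine ⟨d, hd, ?_⟩
  rw [totalDegree, h]; rfl

lemma aux_hc_top_ne_zero {σ R : Type*} [CommSemiring R] {p : MvPolynomial σ R} (hp : p ≠ 0) :
    homogeneousComponent p.totalDegree p ≠ 0 := by
  obtain ⟨d, hd, hdeg⟩ := aux_degree_eq_td hp
  intro h0
  have := coeff_homogeneousComponent (n := p.totalDegree) (φ := p) d
  rw [h0, if_pos hdeg, coeff_zero] at this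
  exact (mem_support_iff.mp hd) this.symm

lemma aux_hc_mul_top {σ R : Type*} [CommSemiring R] (p q : MvPolynomial σ R) :
    homogeneousComponent (p.totalDegree + q.totalDegree) (p * q)
      = homogeneousComponent p.totalDegree p * homogeneousComponent q.totalDegree q := by
  classical
  ext d
  rw [coeff_homogeneousComponent]
  by_cases hd : Finsupp.degree d = p.totalDegree + q.totalDegree
  · rw [if_pos hd, coeff_mul, coeff_mul]
    apply Finset.sum_congr rfl
    rintro ⟨u, v⟩ huv
    dsimp only
    simp only [Finset.HasAntidiagonal.mem_antidiagonal] at huv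
    have hsum : Finsupp.degree u + Finsupp.degree v = p.totalDegree + q.totalDegree := by
      rw [← hd, ← huv]
      simp [Finsupp.degree_eq_weight_one, map_add]
    rw [coeff_homogeneousComponent, coeff_homogeneousComponent]
    by_cases hu : Finsupp.degree u = p.totalDegree
    · rw [if_pos hu, if_pos (by omega)]
    · rcases lt_or_gt_of_ne hu with hlt | hgt
      · have hv : q.totalDegree < Finsupp.degree v := by omega
        have : coeff v q = 0 := coeff_eq_zero_of_totalDegree_lt hv
        rw [this, if_neg hu]
        ring
      · have : coeff u p = 0 := coeff_eq_zero_of_totalDegree_lt hgt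
        rw [this, if_neg hu]
        ring
  · rw [if_neg hd]
    exact (((homogeneousComponent_isHomogeneous p.totalDegree p).mul
      (homogeneousComponent_isHomogeneous q.totalDegree q)).coeff_eq_zero hd).symm

lemma aux_totalDegree_mul_eq {σ R : Type*} [CommRing R] [IsDomain R]
    {p q : MvPolynomial σ R} (hp : p ≠ 0) (hq : q ≠ 0) :
    (p * q).totalDegree = p.totalDegree + q.totalDegree := by
  refine le_antisymm (totalDegree_mul p q) ?_
  by_contra hlt
  push_neg at hlt
  have h0 : homogeneousComponent (p.totalDegree + q.totalDegree) (p * q) = 0 :=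
    homogeneousComponent_eq_zero _ _ hlt
  rw [aux_hc_mul_top] at h0
  exact mul_ne_zero (aux_hc_top_ne_zero hp) (aux_hc_top_ne_zero hq) h0

lemma aux_eq_C_of_td_zero {σ R : Type*} [CommSemiring R] {p : MvPolynomial σ R}
    (h : p.totalDegree = 0) : p = C (coeff 0 p) := by
  classical
  rw [totalDegree_eq_zero_iff] at h
  ext d
  by_cases hd : d = 0
  · simp [hd]
  · rw [coeff_C, if_neg (Ne.symm hd)]
    by_contra hne
    exact hd (Finsupp.ext fun x => h d (mem_support_iff.mpr hne) x)

/-- Let F₁ = z + zw + w², F₂ = z + 2zw + 3w² in ℂ[z,w] and Φ = z² + 2zw.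
If F₁G₁ + F₂G₂ = Φ then deg(F₁G₁) ≥ 3 or deg(F₂G₂) ≥ 3 (total degree). -/
theorem stmt1 (G₁ G₂ : MvPolynomial (Fin 2) ℂ)
    (h : (X 0 + X 0 * X 1 + X 1 ^ 2) * G₁ + (X 0 + 2 * X 0 * X 1 + 3 * X 1 ^ 2) * G₂
      = X 0 ^ 2 + 2 * X 0 * X 1) :
    3 ≤ ((X 0 + X 0 * X 1 + X 1 ^ 2 : MvPolynomial (Fin 2) ℂ) * G₁).totalDegree ∨
      3 ≤ ((X 0 + 2 * X 0 * X 1 + 3 * X 1 ^ 2 : MvPolynomial (Fin 2) ℂ) * G₂).totalDegree := by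
  by_contra hcon
  push_neg at hcon
  obtain ⟨h1, h2⟩ := hcon
  set F₁ : MvPolynomial (Fin 2) ℂ := X 0 + X 0 * X 1 + X 1 ^ 2 with hF₁
  set F₂ : MvPolynomial (Fin 2) ℂ := X 0 + 2 * X 0 * X 1 + 3 * X 1 ^ 2 with hF₂
  -- F₁ and F₂ have total degree ≥ 2 and are nonzero
  have hcF₁ : coeff (Finsupp.single 1 2) F₁ = 1 := by
    simp [hF₁, coeff_add, coeff_X', X_pow_eq_monomial, coeff_monomial, X, monomial_mul,
      Finsupp.single_eq_single_iff, monomial_pow, Finsupp.ext_iff, Fin.forall_fin_two,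
      Finsupp.single_apply, Finsupp.add_apply, Finsupp.smul_apply]
  have hcF₂ : coeff (Finsupp.single 1 2) F₂ = 3 := by
    rw [hF₂, show (2 : MvPolynomial (Fin 2) ℂ) = C 2 from (map_ofNat C 2).symm,
      show (3 : MvPolynomial (Fin 2) ℂ) = C 3 from (map_ofNat C 3).symm]
    simp [coeff_C_mul, C_mul_monomial, mul_assoc, coeff_add, coeff_X', X_pow_eq_monomial, coeff_monomial, X, monomial_mul,
      Finsupp.single_eq_single_iff, monomial_pow, Finsupp.ext_iff, Fin.forall_fin_two,
      Finsupp.single_apply, Finsupp.add_apply, Finsupp.smul_apply]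
  have hF₁ne : F₁ ≠ 0 := fun h0 => by simp [h0] at hcF₁
  have hF₂ne : F₂ ≠ 0 := fun h0 => by simp [h0] at hcF₂
  have hdF₁ : 2 ≤ F₁.totalDegree := by
    have := le_totalDegree (p := F₁) (s := Finsupp.single 1 2)
      (mem_support_iff.mpr (by rw [hcF₁]; norm_num))
    simpa using this
  have hdF₂ : 2 ≤ F₂.totalDegree := by
    have := le_totalDegree (p := F₂) (s := Finsupp.single 1 2)
      (mem_support_iff.mpr (by rw [hcF₂]; norm_num))
    simpa using this
  -- hence G₁ and G₂ are constants
  have hG : ∀ (F G : MvPolynomial (Fin 2) ℂ), F ≠ 0 → 2 ≤ F.totalDegree →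
      (F * G).totalDegree < 3 → G = C (coeff 0 G) := by
    intro F G hFne hdF hFG
    by_cases hGne : G = 0
    · rw [hGne]; simp
    · apply aux_eq_C_of_td_zero
      have := aux_totalDegree_mul_eq hFne hGne
      omega
  obtain hG₁ := hG F₁ G₁ hF₁ne hdF₁ h1
  obtain hG₂ := hG F₂ G₂ hF₂ne hdF₂ h2
  set a := coeff 0 G₁
  set b := coeff 0 G₂
  rw [hG₁, hG₂] at h
  have e1 := congrArg (eval ![1, 1]) h
  have e2 := congrArg (eval ![1, -1]) h
  simp only [map_add, map_mul, map_pow, eval_X, eval_C, map_ofNat, eval_ofNat,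
    Matrix.cons_val_zero, Matrix.cons_val_one, Matrix.head_cons, hF₁, hF₂] at e1 e2
  have : (6 : ℂ) = 0 := by linear_combination 3 * e2 - e1
  norm_num at this
end

section
/- Let F₁,…,Fₙ ∈ ℂ[z₁,…,zₙ] be polynomials whose common zero set in ℂⁿ is finite, and assume their homogenizations have no common zeros on the hyperplane at infinity in ℙⁿ. If Φ ∈ (F₁,…,Fₙ), then there exist polynomials G₁,…,Gₙ with Σ FⱼGⱼ = Φ and deg(FⱼGⱼ) ≤ deg Φ for each j. -/
open MvPolynomial

/-- The homogenization of F with respect to an extra variable z₀ (variable 0 of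
Fin (n+1)): each monomial z^α of F becomes z₀^{deg F − |α|}·z^α. -/
noncomputable def homogenize {n : ℕ} (F : MvPolynomial (Fin n) ℂ) :
    MvPolynomial (Fin (n + 1)) ℂ :=
  ∑ α ∈ F.support,
    monomial (Finsupp.single (0 : Fin (n + 1)) (F.totalDegree - α.sum fun _ k => k)
        + α.mapDomain Fin.succ) (F.coeff α)

open Finset

variable {n : ℕ}

local notation "R" => MvPolynomial (Fin n) ℂ


noncomputable def eps (j : Fin n) (S : Finset (Fin n)) : MvPolynomial (Fin n) ℂ :=
  (-1) ^ ((S.filter (· < j)).card)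

lemma eps_insert {j k : Fin n} (S : Finset (Fin n)) (hj : j ∉ S) :
    eps k (insert j S) = (if j < k then -1 else 1) * eps k S := by
  rw [eps, eps, filter_insert]
  by_cases h : j < k
  · rw [if_pos h, card_insert_of_notMem (by simp [hj]), pow_succ, if_pos h]
    ring
  · rw [if_neg h, if_neg h, one_mul]

lemma eps_antisym' {j k : Fin n} (S₀ : Finset (Fin n)) (hj : j ∉ S₀) (hk : k ∉ S₀)
    (hjk : j ≠ k) :
    eps j (insert k S₀) * eps k (insert j S₀) = -(eps j S₀ * eps k S₀) := by
  rw [eps_insert S₀ hk, eps_insert S₀ hj]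
  rcases lt_or_gt_of_ne hjk with h | h
  · rw [if_pos h, if_neg (asymm h)]; ring
  · rw [if_neg (asymm h), if_pos h]; ring


lemma eps_mul_self (j : Fin n) (S : Finset (Fin n)) : eps j S * eps j S = 1 := by
  rw [eps, ← pow_add, ← two_mul, pow_mul]; norm_num


/-- Core antisymmetry of Koszul signs. -/
lemma eps_antisym {j k : Fin n} (S : Finset (Fin n)) (hj : j ∉ S) (hk : k ∉ S)
    (hjk : j ≠ k) :
    eps j S * eps k (insert j S) = -(eps k S * eps j (insert k S)) := by
  rw [eps_insert S hj, eps_insert S hk]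
  rcases lt_or_gt_of_ne hjk with h | h
  · rw [if_pos h, if_neg (asymm h)]; ring
  · rw [if_neg (asymm h), if_pos h]; ring



noncomputable def KD (f : Fin n → MvPolynomial (Fin n) ℂ)
    (s : Finset (Fin n) → MvPolynomial (Fin n) ℂ) :
    Finset (Fin n) → MvPolynomial (Fin n) ℂ :=
  fun S => ∑ j ∈ Sᶜ, eps j S * f j * s (insert j S)

noncomputable def Kh (r : Fin n → MvPolynomial (Fin n) ℂ)
    (s : Finset (Fin n) → MvPolynomial (Fin n) ℂ) :
    Finset (Fin n) → MvPolynomial (Fin n) ℂ :=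
  fun T => ∑ j ∈ T, eps j (T.erase j) * r j * s (T.erase j)

/-- The Koszul homotopy identity:  D∘h + h∘D = θ·id  with θ = ∑ rⱼfⱼ. -/
lemma homotopy (f r : Fin n → MvPolynomial (Fin n) ℂ)
    (s : Finset (Fin n) → MvPolynomial (Fin n) ℂ) (S : Finset (Fin n)) :
    KD f (Kh r s) S + Kh r (KD f s) S = (∑ j, r j * f j) * s S := by
  have hterm1 : ∀ j ∈ Sᶜ, eps j S * f j * Kh r s (insert j S)
      = r j * f j * s S
        + ∑ k ∈ S, eps j S * f j *
            (eps k (insert j (S.erase k)) * r k * s (insert j (S.erase k))) := by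
    intro j hj
    have hjS : j ∉ S := by simpa using hj
    have : Kh r s (insert j S) = eps j S * r j * s S
        + ∑ k ∈ S, eps k (insert j (S.erase k)) * r k * s (insert j (S.erase k)) := by
      rw [Kh, Finset.sum_insert hjS, Finset.erase_insert hjS]
      congr 1
      refine Finset.sum_congr rfl fun k hk => ?_
      have hkj : k ≠ j := fun h => hjS (h ▸ hk)
      rw [Finset.erase_insert_of_ne hkj.symm]
    rw [this, mul_add, mul_sum]
    congr 1
    have := eps_mul_self j S
    ring_nf
    linear_combination (r j * f j * s S) * this
  have hterm2 : ∀ k ∈ S, eps k (S.erase k) * r k * KD f s (S.erase k)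
      = r k * f k * s S
        + ∑ j ∈ Sᶜ, eps k (S.erase k) * r k *
            (eps j (S.erase k) * f j * s (insert j (S.erase k))) := by
    intro k hk
    have hkE : k ∉ S.erase k := Finset.notMem_erase k S
    have : KD f s (S.erase k) = eps k (S.erase k) * f k * s S
        + ∑ j ∈ Sᶜ, eps j (S.erase k) * f j * s (insert j (S.erase k)) := by
      rw [KD, Finset.compl_erase, Finset.sum_insert (by simpa using hk),
        Finset.insert_erase hk]
    rw [this, mul_add, mul_sum]
    congr 1
    have := eps_mul_self k (S.erase k)
    linear_combination (r k * f k * s S) * this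
  show (∑ j ∈ Sᶜ, eps j S * f j * Kh r s (insert j S))
      + (∑ k ∈ S, eps k (S.erase k) * r k * KD f s (S.erase k)) = _
  rw [Finset.sum_congr rfl hterm1, Finset.sum_congr rfl hterm2,
    Finset.sum_add_distrib, Finset.sum_add_distrib]
  have hcancel : (∑ j ∈ Sᶜ, ∑ k ∈ S, eps j S * f j *
        (eps k (insert j (S.erase k)) * r k * s (insert j (S.erase k))))
      + ∑ k ∈ S, ∑ j ∈ Sᶜ, eps k (S.erase k) * r k *
          (eps j (S.erase k) * f j * s (insert j (S.erase k))) = 0 := by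
    rw [Finset.sum_comm (s := S) (t := Sᶜ), ← Finset.sum_add_distrib]
    refine Finset.sum_eq_zero fun j hj => ?_
    rw [← Finset.sum_add_distrib]
    refine Finset.sum_eq_zero fun k hk => ?_
    have hjS : j ∉ S := by simpa using hj
    have hjk : j ≠ k := fun h => hjS (h ▸ hk)
    have hjE : j ∉ S.erase k := fun h => hjS (Finset.mem_of_mem_erase h)
    have hkE : k ∉ S.erase k := Finset.notMem_erase k S
    have hsgn := eps_antisym' (S.erase k) hjE hkE hjk
    have hS : eps j S = eps j (insert k (S.erase k)) := by
      rw [Finset.insert_erase hk]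
    rw [hS]
    linear_combination (f j * r k * s (insert j (S.erase k))) * hsgn
  have hdiag : (∑ j ∈ Sᶜ, r j * f j * s S) + ∑ k ∈ S, r k * f k * s S
      = (∑ j, r j * f j) * s S := by
    rw [← Finset.sum_mul, ← Finset.sum_mul, ← add_mul,
      Finset.sum_compl_add_sum]
  calc (∑ j ∈ Sᶜ, r j * f j * s S)
        + (∑ j ∈ Sᶜ, ∑ k ∈ S, eps j S * f j *
            (eps k (insert j (S.erase k)) * r k * s (insert j (S.erase k))))
        + ((∑ k ∈ S, r k * f k * s S)
          + ∑ k ∈ S, ∑ j ∈ Sᶜ, eps k (S.erase k) * r k *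
              (eps j (S.erase k) * f j * s (insert j (S.erase k))))
      = ((∑ j ∈ Sᶜ, r j * f j * s S) + ∑ k ∈ S, r k * f k * s S)
        + ((∑ j ∈ Sᶜ, ∑ k ∈ S, eps j S * f j *
            (eps k (insert j (S.erase k)) * r k * s (insert j (S.erase k))))
          + ∑ k ∈ S, ∑ j ∈ Sᶜ, eps k (S.erase k) * r k *
              (eps j (S.erase k) * f j * s (insert j (S.erase k)))) := by ring
    _ = (∑ j, r j * f j) * s S := by rw [hcancel, hdiag, add_zero]



lemma KD_KD (f : Fin n → MvPolynomial (Fin n) ℂ)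
    (s : Finset (Fin n) → MvPolynomial (Fin n) ℂ) : KD f (KD f s) = 0 := by
  funext S
  show ∑ j ∈ Sᶜ, eps j S * f j * KD f s (insert j S) = 0
  have h1 : ∀ j ∈ Sᶜ, eps j S * f j * KD f s (insert j S)
      = ∑ k ∈ Sᶜ.erase j, eps j S * f j *
          (eps k (insert j S) * f k * s (insert k (insert j S))) := by
    intro j hj
    rw [KD, ← compl_insert, mul_sum]
  rw [Finset.sum_congr rfl h1, Finset.sum_sigma']
  apply Finset.sum_involution (fun p _ => ⟨p.2, p.1⟩)
  · rintro ⟨j, k⟩ hmem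
    rw [Finset.mem_sigma] at hmem
    obtain ⟨hj, hk⟩ := hmem
    have hkc : k ∈ Sᶜ := mem_of_mem_erase hk
    have hkj : k ≠ j := ne_of_mem_erase hk
    have hjS : j ∉ S := by simpa using hj
    have hkS : k ∉ S := by simpa using hkc
    have e1 := eps_antisym S hjS hkS (Ne.symm hkj)
    have hins : insert k (insert j S) = insert j (insert k S) :=
      Finset.insert_comm _ _ _
    show eps j S * f j * (eps k (insert j S) * f k * s (insert k (insert j S)))
        + eps k S * f k * (eps j (insert k S) * f j * s (insert j (insert k S))) = 0
    rw [hins]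
    linear_combination (f j * f k * s (insert j (insert k S))) * e1
  · rintro ⟨j, k⟩ hmem _
    rw [Finset.mem_sigma] at hmem
    intro h
    exact (ne_of_mem_erase hmem.2) (congrArg Sigma.fst h)
  · rintro ⟨j, k⟩ _; rfl
  · rintro ⟨j, k⟩ hmem
    rw [Finset.mem_sigma] at hmem ⊢
    exact ⟨mem_of_mem_erase hmem.2,
      Finset.mem_erase.mpr ⟨(ne_of_mem_erase hmem.2).symm, hmem.1⟩⟩



section helpers

variable (f r : Fin n → MvPolynomial (Fin n) ℂ)
variable (s t : Finset (Fin n) → MvPolynomial (Fin n) ℂ)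

lemma KD_supp {p : ℕ} (hs : ∀ T, T.card ≠ p + 1 → s T = 0) :
    ∀ S, S.card ≠ p → KD f s S = 0 := by
  intro S hS
  refine Finset.sum_eq_zero fun j hj => ?_
  rw [hs _ (by
    rw [Finset.card_insert_of_notMem (by simpa using hj)]
    omega), mul_zero]

lemma Kh_supp {p : ℕ} (hs : ∀ T, T.card ≠ p → s T = 0) :
    ∀ T, T.card ≠ p + 1 → Kh r s T = 0 := by
  intro T hT
  refine Finset.sum_eq_zero fun j hj => ?_
  have hpos : 0 < T.card := Finset.card_pos.mpr ⟨j, hj⟩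
  rw [hs _ (by rw [Finset.card_erase_of_mem hj]; omega), mul_zero]

lemma KD_mem (J : Ideal (MvPolynomial (Fin n) ℂ)) (hs : ∀ T, s T ∈ J) :
    ∀ S, KD f s S ∈ J :=
  fun _ => Ideal.sum_mem _ fun _ _ => Ideal.mul_mem_left _ _ (hs _)

lemma Kh_mem (J : Ideal (MvPolynomial (Fin n) ℂ)) (hs : ∀ T, s T ∈ J) :
    ∀ T, Kh r s T ∈ J :=
  fun _ => Ideal.sum_mem _ fun _ _ => Ideal.mul_mem_left _ _ (hs _)

lemma KD_add : KD f (fun S => s S + t S) = fun S => KD f s S + KD f t S := by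
  funext S
  simp only [KD]
  rw [← Finset.sum_add_distrib]
  exact Finset.sum_congr rfl fun j _ => mul_add _ _ _

lemma KD_smul (c : MvPolynomial (Fin n) ℂ) :
    KD f (fun S => s S * c) = fun S => KD f s S * c := by
  funext S
  simp only [KD]
  rw [Finset.sum_mul]
  exact Finset.sum_congr rfl fun j _ => (mul_assoc _ _ _).symm

end helpers

/-- "Every Koszul `p`-cycle mod `J` is a boundary mod `J`". -/
def Syz (f : Fin n → MvPolynomial (Fin n) ℂ) (J : Ideal (MvPolynomial (Fin n) ℂ))
    (p : ℕ) : Prop :=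
  ∀ z : Finset (Fin n) → MvPolynomial (Fin n) ℂ,
    (∀ S, S.card ≠ p → z S = 0) → (∀ S, KD f z S ∈ J) →
    ∃ w : Finset (Fin n) → MvPolynomial (Fin n) ℂ,
      (∀ S, S.card ≠ p + 1 → w S = 0) ∧ ∀ S, z S - KD f w S ∈ J

lemma chase (f r : Fin n → MvPolynomial (Fin n) ℂ)
    (J : Ideal (MvPolynomial (Fin n) ℂ))
    (hNZD : ∀ g, (∑ j, r j * f j) * g ∈ J → g ∈ J) (p : ℕ)
    (h1 : Syz f (J ⊔ Ideal.span {∑ j, r j * f j}) (p + 1)) : Syz f J p := by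
  classical
  intro z hzsupp hzJ
  set θ := ∑ j, r j * f j with hθ
  set y := Kh r z with hy
  have hysupp : ∀ T, T.card ≠ p + 1 → y T = 0 := Kh_supp r z hzsupp
  have hyD : ∀ S, KD f y S ∈ J ⊔ Ideal.span {θ} := by
    intro S
    have hid := homotopy f r z S
    have : KD f y S = θ * z S - Kh r (KD f z) S := by
      rw [hy]; linear_combination hid
    rw [this]
    refine sub_mem ?_ ?_
    · exact Ideal.mem_sup_right (Ideal.mem_span_singleton'.mpr ⟨z S, mul_comm _ _⟩)
    · exact Ideal.mem_sup_left (Kh_mem r _ J hzJ S)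
  obtain ⟨w, hwsupp, hwmem⟩ := h1 y hysupp hyD
  have key : ∀ S, ∃ a c, a ∈ J ∧ y S - KD f w S = a + c * θ ∧
      (S.card ≠ p + 1 → c = 0) := by
    intro S
    by_cases hc : S.card = p + 1
    · obtain ⟨a, haJ, b, hb, hab⟩ := Submodule.mem_sup.mp (hwmem S)
      obtain ⟨c, rfl⟩ := Ideal.mem_span_singleton'.mp hb
      exact ⟨a, c, haJ, hab.symm, fun h => absurd hc h⟩
    · refine ⟨0, 0, J.zero_mem, ?_, fun _ => rfl⟩
      rw [hysupp S hc, KD_supp f w (fun T hT => hwsupp T (by omega)) S hc]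
      ring
  choose av cv hav heq hcv using key
  refine ⟨cv, hcv, fun S => ?_⟩
  have hyeq : y = fun S => av S + cv S * θ + KD f w S := by
    funext S; linear_combination (heq S)
  have hKDy : KD f y S = KD f av S + KD f cv S * θ := by
    have e1 : KD f y = fun S => KD f (fun T => av T + cv T * θ) S + KD f (KD f w) S := by
      rw [hyeq, ← KD_add]
    have e2 : KD f (fun T => av T + cv T * θ)
        = fun S => KD f av S + KD f cv S * θ := by
      rw [KD_add, KD_smul]
    rw [e1, e2, KD_KD]
    simp
  have hmul : θ * (z S - KD f cv S) = KD f av S + Kh r (KD f z) S := by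
    have hid := homotopy f r z S
    have : KD f (Kh r z) S = KD f y S := by rw [hy]
    rw [mul_sub]
    calc θ * z S - θ * KD f cv S
        = (KD f (Kh r z) S + Kh r (KD f z) S) - θ * KD f cv S := by rw [hid]
      _ = (KD f av S + KD f cv S * θ + Kh r (KD f z) S) - θ * KD f cv S := by
          rw [this, hKDy]
      _ = KD f av S + Kh r (KD f z) S := by ring
  refine hNZD _ ?_
  rw [hmul]
  exact add_mem (KD_mem f av J hav S) (Kh_mem r _ J hzJ S)



/-- The monomial ideal generated by `Xᵢ^{Nᵢ}` for indices `i < m`. -/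
noncomputable def Jm (N : Fin n → ℕ) (m : ℕ) : Ideal (MvPolynomial (Fin n) ℂ) :=
  Ideal.span {g | ∃ i : Fin n, (i : ℕ) < m ∧ g = X i ^ N i}

lemma mem_Jm_iff (N : Fin n → ℕ) (m : ℕ) (g : MvPolynomial (Fin n) ℂ) :
    g ∈ Jm N m ↔ ∀ α ∈ g.support, ∃ i : Fin n, (i : ℕ) < m ∧ N i ≤ α i := by
  constructor
  · intro hg
    refine Submodule.span_induction ?_ ?_ ?_ ?_ hg
    · rintro x ⟨i, hi, rfl⟩ α hα
      rw [X_pow_eq_monomial, support_monomial, if_neg one_ne_zero] at hα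
      rw [Finset.mem_singleton] at hα
      subst hα
      exact ⟨i, hi, by simp⟩
    · simp
    · intro x y _ _ hx hy α hα
      rcases Finset.mem_union.mp (MvPolynomial.support_add hα) with h | h
      · exact hx α h
      · exact hy α h
    · intro c x _ hx α hα
      have : α ∈ (c * x).support := hα
      obtain ⟨β, hβ, γ, hγ, rfl⟩ := Finset.mem_add.mp (MvPolynomial.support_mul _ _ this)
      obtain ⟨i, hi, hNi⟩ := hx γ hγ
      exact ⟨i, hi, le_trans hNi (by simp [Finsupp.add_apply])⟩
  · intro h
    -- strong induction on the support
    suffices H : ∀ (k : ℕ) (g : MvPolynomial (Fin n) ℂ), g.support.card ≤ k →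
        (∀ α ∈ g.support, ∃ i : Fin n, (i : ℕ) < m ∧ N i ≤ α i) → g ∈ Jm N m from
      H g.support.card g le_rfl h
    intro k
    induction k with
    | zero =>
      intro g hg _
      rw [Nat.le_zero, Finset.card_eq_zero, MvPolynomial.support_eq_empty] at hg
      simp [hg]
    | succ k ih =>
      intro g hg hcond
      rcases eq_or_ne g 0 with rfl | hg0
      · simp
      have hne : g.support.Nonempty := MvPolynomial.support_nonempty.mpr hg0
      obtain ⟨α, hα⟩ := hne
      obtain ⟨i, hi, hNi⟩ := hcond α hα
      set c := coeff α g with hc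
      set g' := g - monomial α c with hg'
      have hsupp' : g'.support ⊆ g.support.erase α := by
        intro β hβ
        have hβc : coeff β g' ≠ 0 := mem_support_iff.mp hβ
        rcases eq_or_ne β α with rfl | hβα
        · exfalso; apply hβc
          rw [hg', coeff_sub, coeff_monomial, if_pos rfl, hc, sub_self]
        · refine Finset.mem_erase.mpr ⟨hβα, mem_support_iff.mpr ?_⟩
          intro h0
          apply hβc
          rw [hg', coeff_sub, coeff_monomial, if_neg (Ne.symm hβα), h0, sub_zero]
      have hmono : (monomial α c : MvPolynomial (Fin n) ℂ) ∈ Jm N m := by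
        have hdec : Finsupp.single i (N i) + (α - Finsupp.single i (N i)) = α := by
          ext j
          rcases eq_or_ne j i with rfl | hji
          · simp [hNi]
          · simp [Finsupp.single_apply, Ne.symm hji]
        have : (monomial α c : MvPolynomial (Fin n) ℂ)
            = X i ^ N i * monomial (α - Finsupp.single i (N i)) c := by
          rw [X_pow_eq_monomial, monomial_mul, one_mul, hdec]
        rw [this]
        exact Ideal.mul_mem_right _ _ (Ideal.subset_span ⟨i, hi, rfl⟩)
      have hg'mem : g' ∈ Jm N m := by
        apply ih
        · have := Finset.card_le_card hsupp'
          have := Finset.card_erase_of_mem hα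
          omega
        · intro β hβ
          exact hcond β (Finset.mem_of_mem_erase (hsupp' hβ))
      have : g = g' + monomial α c := by rw [hg']; ring
      rw [this]
      exact Ideal.add_mem _ hg'mem hmono

lemma Jm_NZD (N : Fin n → ℕ) (m : ℕ) (t : Fin n) (ht : (t : ℕ) = m)
    (g : MvPolynomial (Fin n) ℂ) (h : X t ^ N t * g ∈ Jm N m) : g ∈ Jm N m := by
  rw [mem_Jm_iff] at h ⊢
  intro α hα
  have hcoeff : coeff (Finsupp.single t (N t) + α) (X t ^ N t * g) = coeff α g := by
    rw [X_pow_eq_monomial, coeff_monomial_mul, one_mul]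
  have hmem : (Finsupp.single t (N t) + α) ∈ (X t ^ N t * g).support := by
    rw [mem_support_iff, hcoeff]
    exact mem_support_iff.mp hα
  obtain ⟨i, hi, hNi⟩ := h _ hmem
  have hit : i ≠ t := by
    intro hh
    rw [hh, ht] at hi
    omega
  refine ⟨i, hi, ?_⟩
  rwa [Finsupp.add_apply, Finsupp.single_apply, if_neg (fun hh => hit hh.symm),
    zero_add] at hNi

lemma Jm_succ (N : Fin n → ℕ) (m : ℕ) (hm : m < n) :
    Jm N m ⊔ Ideal.span {X (⟨m, hm⟩ : Fin n) ^ N ⟨m, hm⟩} = Jm N (m + 1) := by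
  rw [Jm, Jm, ← Ideal.span_union]
  congr 1
  ext g
  constructor
  · rintro (⟨i, hi, rfl⟩ | hg)
    · exact ⟨i, by omega, rfl⟩
    · rw [Set.mem_singleton_iff] at hg
      exact ⟨⟨m, hm⟩, by simp, hg⟩
  · rintro ⟨i, hi, rfl⟩
    rcases eq_or_ne (i : ℕ) m with he | hne
    · right
      have : i = ⟨m, hm⟩ := Fin.ext he
      rw [this]
      rfl
    · left
      exact ⟨i, by omega, rfl⟩

lemma Jm_zero (N : Fin n → ℕ) : Jm N 0 = ⊥ := by
  rw [Jm]
  convert Ideal.span_empty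
  ext g
  simp



lemma Syz_trivial (f : Fin n → MvPolynomial (Fin n) ℂ)
    (J : Ideal (MvPolynomial (Fin n) ℂ)) (p : ℕ) (hp : n < p) : Syz f J p := by
  intro z hz _
  refine ⟨fun _ => 0, fun _ _ => rfl, fun S => ?_⟩
  have hcard : S.card ≤ n := by
    have := Finset.card_le_univ S
    simpa using this
  have hz0 : z S = 0 := hz S (by omega)
  have hKD0 : KD f (fun _ => (0 : MvPolynomial (Fin n) ℂ)) S = 0 :=
    Finset.sum_eq_zero fun j _ => mul_zero _
  rw [hz0, hKD0, sub_zero]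
  exact J.zero_mem

lemma descent (f : Fin n → MvPolynomial (Fin n) ℂ) (N : Fin n → ℕ)
    (hNmem : ∀ i : Fin n, ∃ r : Fin n → MvPolynomial (Fin n) ℂ,
      ∑ j, r j * f j = X i ^ N i) :
    Syz f ⊥ 1 := by
  have key : ∀ k, k ≤ n → Syz f (Jm N (n - k)) (n - k + 1) := by
    intro k
    induction k with
    | zero => intro _; exact Syz_trivial f _ _ (by omega)
    | succ k ih =>
      intro hk
      have hk' : k ≤ n := Nat.le_of_succ_le hk
      have hm : n - (k + 1) < n := by omega
      set m := n - (k + 1) with hmdef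
      obtain ⟨r, hr⟩ := hNmem ⟨m, hm⟩
      have hstep : Syz f (Jm N m) (m + 1) := by
        apply chase f r (Jm N m) ?_ (m + 1) ?_
        · intro g hg
          rw [hr] at hg
          exact Jm_NZD N m ⟨m, hm⟩ rfl g hg
        · rw [hr, Jm_succ N m hm]
          have harith : n - k = m + 1 := by omega
          have := ih hk'
          rw [harith] at this
          exact this
      exact hstep
  have := key n le_rfl
  rw [Nat.sub_self] at this
  rw [← Jm_zero N]
  exact this

/-- Every syzygy of the `f j` is a "Koszul syzygy", given that each variable has
a power in the ideal spanned by the `f j`. -/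
lemma koszul_syzygy (f : Fin n → MvPolynomial (Fin n) ℂ) (N : Fin n → ℕ)
    (hNmem : ∀ i : Fin n, ∃ r : Fin n → MvPolynomial (Fin n) ℂ,
      ∑ j, r j * f j = X i ^ N i)
    (h : Fin n → MvPolynomial (Fin n) ℂ) (hsyz : ∑ j, f j * h j = 0) :
    ∃ a : Fin n → Fin n → MvPolynomial (Fin n) ℂ,
      (∀ i j, a i j = - a j i) ∧ ∀ j, h j = ∑ i, a i j * f i := by
  classical
  have hS := descent f N hNmem
  set z : Finset (Fin n) → MvPolynomial (Fin n) ℂ :=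
    fun S => ∑ j, if S = {j} then h j else 0 with hz
  have hzsupp : ∀ S, S.card ≠ 1 → z S = 0 := by
    intro S hS1
    refine Finset.sum_eq_zero fun j _ => ?_
    rw [if_neg (fun hh => hS1 (by rw [hh]; simp))]
  have hzsing : ∀ j, z {j} = h j := by
    intro j
    show (∑ i, if ({j} : Finset (Fin n)) = {i} then h i else 0) = h j
    rw [Finset.sum_eq_single j]
    · simp
    · intro b _ hbj
      rw [if_neg (fun hh => hbj (Finset.singleton_inj.mp hh.symm))]
    · intro hj; exact absurd (Finset.mem_univ j) hj
  have hcycle : ∀ S, KD f z S ∈ (⊥ : Ideal (MvPolynomial (Fin n) ℂ)) := by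
    intro S
    rw [Ideal.mem_bot]
    rcases eq_or_ne S ∅ with rfl | hSne
    · have : KD f z ∅ = ∑ j, eps j ∅ * f j * z {j} := by
        rw [KD]
        refine Finset.sum_congr (by simp) fun j _ => rfl
      rw [this]
      have heps : ∀ j : Fin n, eps j ∅ = 1 := fun j => by
        rw [eps]; simp
      calc ∑ j, eps j ∅ * f j * z {j} = ∑ j, f j * h j := by
            refine Finset.sum_congr rfl fun j _ => by rw [heps, hzsing, one_mul]
        _ = 0 := hsyz
    · refine Finset.sum_eq_zero fun j hj => ?_
      have : (insert j S).card ≠ 1 := by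
        rw [Finset.card_insert_of_notMem (by simpa using hj)]
        have : 0 < S.card := Finset.card_pos.mpr (Finset.nonempty_of_ne_empty hSne)
        omega
      rw [hzsupp _ this, mul_zero]
  obtain ⟨w, hwsupp, hwmem⟩ := hS z hzsupp hcycle
  have hzeq : ∀ S, z S = KD f w S := by
    intro S
    have := hwmem S
    rw [Ideal.mem_bot, sub_eq_zero] at this
    exact this
  set a : Fin n → Fin n → MvPolynomial (Fin n) ℂ :=
    fun i j => if i = j then 0 else eps i {j} * w (insert i {j}) with ha
  have hepspair : ∀ i j : Fin n, i ≠ j → eps i {j} = - eps j {i} := by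
    intro i j hij
    rw [eps, eps]
    rcases lt_or_gt_of_ne hij with h | h
    · rw [Finset.filter_singleton, if_neg (asymm h), Finset.filter_singleton, if_pos h]
      simp
    · rw [Finset.filter_singleton, if_pos h, Finset.filter_singleton, if_neg (asymm h)]
      simp
  refine ⟨a, ?_, ?_⟩
  · intro i j
    rcases eq_or_ne i j with rfl | hij
    · simp [ha]
    · rw [ha]
      simp only [if_neg hij, if_neg (Ne.symm hij)]
      rw [hepspair i j hij, Finset.pair_comm i j]
      ring
  · intro j
    have h1 : h j = KD f w {j} := by rw [← hzsing, hzeq]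
    have h2 : ∑ i, a i j * f i = ∑ i ∈ Finset.univ.erase j, a i j * f i := by
      refine (Finset.sum_erase _ ?_).symm
      simp [ha]
    rw [h1, h2, KD, Finset.compl_singleton]
    refine Finset.sum_congr rfl fun i hi => ?_
    have hij : i ≠ j := Finset.ne_of_mem_erase hi
    rw [ha]
    simp only [if_neg hij]
    ring



lemma hc_of_isHomogeneous {p : R} {m : ℕ} (h : p.IsHomogeneous m) (e : ℕ) :
    homogeneousComponent e p = if e = m then p else 0 :=
  homogeneousComponent_of_mem ((mem_homogeneousSubmodule _ _).mpr h)

lemma hc_self {p : R} {m : ℕ} (h : p.IsHomogeneous m) :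
    homogeneousComponent m p = p := by
  rw [hc_of_isHomogeneous h, if_pos rfl]

lemma hc_top_ne_zero {p : R} (hp : p ≠ 0) :
    homogeneousComponent p.totalDegree p ≠ 0 := by
  obtain ⟨α, hα, hdeg⟩ : ∃ α ∈ p.support, (α.sum fun _ e => e) = p.totalDegree := by
    obtain ⟨α, hα, h⟩ := Finset.exists_mem_eq_sup p.support
      (MvPolynomial.support_nonempty.mpr hp) (fun s => s.sum fun _ e => e)
    exact ⟨α, hα, h.symm⟩
  intro h0
  have : coeff α (homogeneousComponent p.totalDegree p) = coeff α p := by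
    rw [coeff_homogeneousComponent, if_pos]
    exact hdeg
  rw [h0] at this
  exact mem_support_iff.mp hα (by simpa using this.symm)

lemma le_totalDegree_of_hc_ne_zero {p : R} {e : ℕ}
    (h : homogeneousComponent e p ≠ 0) : e ≤ p.totalDegree := by
  by_contra hlt
  push_neg at hlt
  exact h (homogeneousComponent_eq_zero e p hlt)

lemma totalDegree_hc_le (p : R) (e : ℕ) :
    (homogeneousComponent e p).totalDegree ≤ e :=
  IsHomogeneous.totalDegree_le (homogeneousComponent_isHomogeneous e p)

lemma strip_top (p : R) (e : ℕ) (hp : p.totalDegree ≤ e) :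
    (p - homogeneousComponent e p) = 0 ∨
      (p - homogeneousComponent e p).totalDegree < e := by
  set q := p - homogeneousComponent e p with hq
  rcases eq_or_ne q 0 with h | h
  · exact Or.inl h
  right
  have hcoeff : ∀ α, α ∈ q.support → (α.sum fun _ e => e) < e := by
    intro α hα
    have hc : coeff α q ≠ 0 := mem_support_iff.mp hα
    have : coeff α q = coeff α p - (if (α.sum fun _ e => e) = e then coeff α p else 0) := by
      rw [hq, coeff_sub, coeff_homogeneousComponent]
      rfl
    by_cases hde : (α.sum fun _ e => e) = e
    · exfalso; apply hc; rw [this, if_pos hde, sub_self]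
    · have hne0 : coeff α p ≠ 0 := by
        intro h0; apply hc; rw [this, if_neg hde, h0, sub_zero]
      have : (α.sum fun _ e => e) ≤ p.totalDegree := le_totalDegree (mem_support_iff.mpr hne0)
      omega
  rw [totalDegree]
  obtain ⟨α, hα⟩ := MvPolynomial.support_nonempty.mpr h
  refine Finset.sup_lt_iff ?_ |>.mpr hcoeff
  show (0 : ℕ) < e
  have := hcoeff α hα
  omega

/-- Top homogeneous component of a product. -/
lemma hc_mul_top (P Q : R) (a b : ℕ) (hP : P.totalDegree ≤ a) (hQ : Q.totalDegree ≤ b) :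
    homogeneousComponent (a + b) (P * Q)
      = homogeneousComponent a P * homogeneousComponent b Q := by
  set Pa := homogeneousComponent a P with hPa
  set Qb := homogeneousComponent b Q with hQb
  set P' := P - Pa with hP'
  set Q' := Q - Qb with hQ'
  have hsplit : P * Q = Pa * Qb + (Pa * Q' + P' * Qb + P' * Q') := by
    rw [hP', hQ']; ring
  have hhom : (Pa * Qb).IsHomogeneous (a + b) :=
    (homogeneousComponent_isHomogeneous a P).mul (homogeneousComponent_isHomogeneous b Q)
  have hlow : ∀ u : R, u = 0 ∨ u.totalDegree < a + b →
      homogeneousComponent (a + b) u = 0 := by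
    rintro u (rfl | hu)
    · exact map_zero _
    · exact homogeneousComponent_eq_zero _ _ hu
  have h1 : homogeneousComponent (a + b) (Pa * Q') = 0 := by
    apply hlow
    rcases strip_top Q b hQ with h | h
    · left; rw [← hQ'] at h; rw [h, mul_zero]
    · rw [← hQ'] at h
      rcases eq_or_ne (Pa * Q') 0 with h0 | h0
      · exact Or.inl h0
      right
      calc (Pa * Q').totalDegree ≤ Pa.totalDegree + Q'.totalDegree := totalDegree_mul _ _
        _ < a + b := by
            have := totalDegree_hc_le P a
            rw [← hPa] at this
            omega
  have h2 : homogeneousComponent (a + b) (P' * Qb) = 0 := by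
    apply hlow
    rcases strip_top P a hP with h | h
    · left; rw [← hP'] at h; rw [h, zero_mul]
    · rw [← hP'] at h
      rcases eq_or_ne (P' * Qb) 0 with h0 | h0
      · exact Or.inl h0
      right
      calc (P' * Qb).totalDegree ≤ P'.totalDegree + Qb.totalDegree := totalDegree_mul _ _
        _ < a + b := by
            have := totalDegree_hc_le Q b
            rw [← hQb] at this
            omega
  have h3 : homogeneousComponent (a + b) (P' * Q') = 0 := by
    apply hlow
    rcases strip_top P a hP with h | h
    · left; rw [← hP'] at h; rw [h, zero_mul]
    · rw [← hP'] at h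
      rcases strip_top Q b hQ with h' | h'
      · left; rw [← hQ'] at h'; rw [h', mul_zero]
      right
      rw [← hQ'] at h'
      calc (P' * Q').totalDegree ≤ P'.totalDegree + Q'.totalDegree := totalDegree_mul _ _
        _ < a + b := by omega
  rw [hsplit, map_add, map_add, map_add, h1, h2, h3, hc_self hhom]
  ring

lemma totalDegree_mul_eq {P Q : R} (hP : P ≠ 0) (hQ : Q ≠ 0) :
    (P * Q).totalDegree = P.totalDegree + Q.totalDegree := by
  refine le_antisymm (totalDegree_mul _ _) ?_
  apply le_totalDegree_of_hc_ne_zero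
  rw [hc_mul_top P Q _ _ le_rfl le_rfl]
  exact mul_ne_zero (hc_top_ne_zero hP) (hc_top_ne_zero hQ)

/-- Extracting a homogeneous component from a multiple of a homogeneous polynomial. -/
lemma hc_mul_homogeneous (c f : R) (df e : ℕ) (hf : f.IsHomogeneous df) :
    homogeneousComponent e (c * f)
      = if df ≤ e then homogeneousComponent (e - df) c * f else 0 := by
  conv_lhs => rw [← sum_homogeneousComponent c, Finset.sum_mul, map_sum]
  have hterm : ∀ k, homogeneousComponent e (homogeneousComponent k c * f)
      = if e = k + df then homogeneousComponent k c * f else 0 := by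
    intro k
    exact hc_of_isHomogeneous ((homogeneousComponent_isHomogeneous k c).mul hf) e
  rw [Finset.sum_congr rfl fun k _ => hterm k]
  by_cases hdf : df ≤ e
  · rw [if_pos hdf]
    by_cases hrange : e - df ≤ c.totalDegree
    · rw [Finset.sum_eq_single (e - df)]
      · rw [if_pos (by omega)]
      · intro k _ hk
        rw [if_neg (by omega)]
      · intro hnot
        exfalso
        exact hnot (Finset.mem_range.mpr (by omega))
    · rw [Finset.sum_eq_zero, homogeneousComponent_eq_zero _ _ (by omega), zero_mul]
      intro k hk
      rw [Finset.mem_range] at hk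
      rw [if_neg (by omega)]
  · rw [if_neg hdf, Finset.sum_eq_zero]
    intro k _
    rw [if_neg (by omega)]

lemma antisym_double_sum (c : Fin n → Fin n → R) (hanti : ∀ i j, c i j = - c j i) :
    ∑ i, ∑ j, c i j = 0 := by
  have hswap : (∑ i, ∑ j, c i j) = ∑ i, ∑ j, c j i := Finset.sum_comm
  have h2 : (∑ i, ∑ j, c i j) + (∑ i, ∑ j, c i j) = 0 := by
    nth_rewrite 2 [hswap]
    rw [← Finset.sum_add_distrib]
    refine Finset.sum_eq_zero fun i _ => ?_
    rw [← Finset.sum_add_distrib]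
    refine Finset.sum_eq_zero fun j _ => ?_
    rw [hanti i j]; ring
  have := add_self_eq_zero.mp h2
  exact this



lemma eval_homogenize_zero (F : MvPolynomial (Fin n) ℂ) (x : Fin n → ℂ) :
    eval (Fin.cons 0 x) (homogenize F)
      = eval x (homogeneousComponent F.totalDegree F) := by
  classical
  set d := F.totalDegree with hd
  have hLHS : eval (Fin.cons 0 x) (homogenize F)
      = ∑ α ∈ F.support,
          (if (α.sum fun _ k => k) = d then F.coeff α * ∏ i, x i ^ α i else 0) := by
    rw [homogenize, map_sum]
    refine Finset.sum_congr rfl fun α hα => ?_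
    rw [eval_monomial]
    set μ := Finsupp.single (0 : Fin (n + 1)) (d - α.sum fun _ k => k)
        + α.mapDomain Fin.succ with hμ
    have hprod : (μ.prod fun i e => (Fin.cons 0 x : Fin (n+1) → ℂ) i ^ e)
        = ∏ i : Fin (n + 1), (Fin.cons 0 x : Fin (n+1) → ℂ) i ^ μ i :=
      Finsupp.prod_pow μ _
    have hμ0 : μ 0 = d - α.sum fun _ k => k := by
      rw [hμ, Finsupp.add_apply, Finsupp.single_apply, if_pos rfl,
        Finsupp.mapDomain_notin_range _ _ (by
          rintro ⟨i, hi⟩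
          exact Fin.succ_ne_zero i hi), add_zero]
    have hμs : ∀ i : Fin n, μ i.succ = α i := by
      intro i
      rw [hμ, Finsupp.add_apply, Finsupp.single_apply,
        if_neg (Fin.succ_ne_zero i).symm,
        Finsupp.mapDomain_apply (Fin.succ_injective n), zero_add]
    rw [hprod, Fin.prod_univ_succ]
    simp only [Fin.cons_zero, Fin.cons_succ, hμ0]
    rw [Finset.prod_congr rfl (fun i _ => by rw [hμs i])]
    have hle : (α.sum fun _ k => k) ≤ d := le_totalDegree hα
    by_cases hcase : (α.sum fun _ k => k) = d
    · rw [if_pos hcase]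
      have : d - (α.sum fun _ k => k) = 0 := by omega
      rw [this, pow_zero, one_mul]
    · rw [if_neg hcase]
      have : d - (α.sum fun _ k => k) ≠ 0 := by omega
      rw [zero_pow this, zero_mul, mul_zero]
  have hRHS : eval x (homogeneousComponent d F)
      = ∑ α ∈ F.support,
          (if (α.sum fun _ k => k) = d then F.coeff α * ∏ i, x i ^ α i else 0) := by
    rw [homogeneousComponent_apply, map_sum, Finset.sum_filter]
    refine Finset.sum_congr rfl fun α hα => ?_
    have hdeg : (Finsupp.degree α) = α.sum fun _ k => k := by
      rw [Finsupp.degree, Finsupp.sum]; rfl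
    rw [hdeg]
    by_cases hcase : (α.sum fun _ k => k) = d
    · rw [if_pos hcase, if_pos hcase, eval_monomial, Finsupp.prod_pow]
    · rw [if_neg hcase, if_neg hcase]
  rw [hLHS, hRHS]

lemma pow_mem_span_leading (f : Fin n → MvPolynomial (Fin n) ℂ)
    (hV : ∀ x : Fin n → ℂ, (∀ j, eval x (f j) = 0) → x = 0) (i : Fin n) :
    ∃ N : ℕ, X i ^ N ∈ Ideal.span (Set.range f) := by
  have hrad : X i ∈ (Ideal.span (Set.range f)).radical := by
    rw [← vanishingIdeal_zeroLocus_eq_radical (K := ℂ)]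
    rw [mem_vanishingIdeal_iff]
    intro x hx
    have hx' : ∀ j, eval x (f j) = 0 := by
      intro j
      exact (mem_zeroLocus_iff.mp hx) _ (Ideal.subset_span ⟨j, rfl⟩)
    have := hV x hx'
    rw [this]
    simp
  exact hrad



lemma deg_drop (P : R) (d : ℕ) (h1 : 1 ≤ d) (h2 : P.totalDegree ≤ d)
    (h3 : homogeneousComponent d P = 0) : P.totalDegree ≤ d - 1 := by
  rcases eq_or_ne P 0 with rfl | h0
  · rw [totalDegree_zero]; omega
  have hne : P.totalDegree ≠ d := by
    intro he
    exact hc_top_ne_zero h0 (by rw [he]; exact h3)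
  omega

lemma reduce_step (F : Fin n → R) (Φ : R)
    (hF1 : ∀ i, (F i).totalDegree = 0 → F i = 0)
    (hKos : ∀ h : Fin n → R,
      (∑ j, homogeneousComponent (F j).totalDegree (F j) * h j) = 0 →
      ∃ a : Fin n → Fin n → R, (∀ i j, a i j = - a j i) ∧
        ∀ j, h j = ∑ i, a i j * homogeneousComponent (F i).totalDegree (F i))
    (d : ℕ) (hd : Φ.totalDegree < d) (G : Fin n → R)
    (hz : ∀ j, F j * G j = 0 → G j = 0)
    (hsum : ∑ j, F j * G j = Φ) (hdeg : ∀ j, (F j * G j).totalDegree ≤ d) :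
    ∃ G' : Fin n → R, (∑ j, F j * G' j = Φ) ∧
      ∀ j, (F j * G' j).totalDegree ≤ d - 1 := by
  classical
  have hd1 : 1 ≤ d := by omega
  set dd : Fin n → ℕ := fun j => (F j).totalDegree with hdd
  set f : Fin n → R := fun j => homogeneousComponent (dd j) (F j) with hf
  set h : Fin n → R := fun j => homogeneousComponent (d - dd j) (G j) with hh
  have hGdeg : ∀ j, G j ≠ 0 → dd j + (G j).totalDegree ≤ d := by
    intro j hGj
    have hFj : F j ≠ 0 := fun h0 => hGj (hz j (by rw [h0, zero_mul]))
    have h1 := totalDegree_mul_eq hFj hGj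
    have h2 := hdeg j
    rw [h1] at h2
    exact h2
  have hprod : ∀ j, homogeneousComponent d (F j * G j) = f j * h j := by
    intro j
    rcases eq_or_ne (G j) 0 with h0 | h0
    · rw [h0, mul_zero, map_zero, hh]
      simp only [h0, map_zero, mul_zero]
    · have hb := hGdeg j h0
      have hdj : dd j ≤ d := by omega
      have key := hc_mul_top (F j) (G j) (dd j) (d - dd j) le_rfl (by omega)
      rw [show dd j + (d - dd j) = d from by omega] at key
      exact key
  have hsyz : ∑ j, f j * h j = 0 := by
    calc ∑ j, f j * h j = ∑ j, homogeneousComponent d (F j * G j) :=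
          Finset.sum_congr rfl fun j _ => (hprod j).symm
      _ = homogeneousComponent d (∑ j, F j * G j) := (map_sum _ _ _).symm
      _ = homogeneousComponent d Φ := by rw [hsum]
      _ = 0 := homogeneousComponent_eq_zero _ _ hd
  obtain ⟨a, hanti, hrep⟩ := hKos h hsyz
  set a' : Fin n → Fin n → R := fun i j =>
    if dd i + dd j ≤ d then homogeneousComponent (d - dd i - dd j) (a i j) else 0
    with ha'
  have hanti' : ∀ i j, a' i j = - a' j i := by
    intro i j
    rw [ha']
    simp only
    by_cases hij : dd i + dd j ≤ d
    · rw [if_pos hij, if_pos (by omega),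
        show d - dd j - dd i = d - dd i - dd j from by omega, hanti i j, map_neg]
    · rw [if_neg hij, if_neg (by omega), neg_zero]
  have hrep' : ∀ j, h j = ∑ i, a' i j * f i := by
    intro j
    have h1 : h j = homogeneousComponent (d - dd j) (h j) :=
      (hc_self (homogeneousComponent_isHomogeneous _ _)).symm
    nth_rewrite 1 [h1, hrep j]
    rw [map_sum]
    refine Finset.sum_congr rfl fun i _ => ?_
    rw [hc_mul_homogeneous (a i j) (f i) (dd i) (d - dd j)
      (homogeneousComponent_isHomogeneous _ _)]
    rcases eq_or_ne (f i) 0 with hfi | hfi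
    · rw [hfi]
      split_ifs <;> simp
    · have hFi : F i ≠ 0 := by
        intro h0
        apply hfi
        rw [hf]
        simp only [hdd, h0, map_zero]
      have h1le : 1 ≤ dd i := by
        rcases Nat.eq_zero_or_pos (dd i) with h0 | h0
        · exact absurd (hF1 i h0) hFi
        · exact h0
      by_cases hcond : dd i + dd j ≤ d
      · rw [if_pos (show dd i ≤ d - dd j from by omega), ha']
        simp only
        rw [if_pos hcond, show d - dd j - dd i = d - dd i - dd j from by omega]
      · rw [if_neg (show ¬ dd i ≤ d - dd j from by omega), ha']
        simp only
        rw [if_neg hcond, zero_mul]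
  have expand : ∀ j, F j * (G j - ∑ i, a' i j * F i)
      = F j * G j - ∑ i, a' i j * F i * F j := by
    intro j
    rw [mul_sub, Finset.mul_sum]
    congr 1
    exact Finset.sum_congr rfl fun i _ => by ring
  refine ⟨fun j => G j - ∑ i, a' i j * F i, ?_, ?_⟩
  · rw [Finset.sum_congr rfl fun j _ => expand j, Finset.sum_sub_distrib, hsum]
    have hzero : ∑ j, ∑ i, a' i j * F i * F j = 0 := by
      apply antisym_double_sum (fun j i => a' i j * F i * F j)
      intro i j
      rw [hanti' j i]
      ring
    rw [hzero, sub_zero]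
  · intro j
    rw [expand j]
    have hdegle : (F j * G j - ∑ i, a' i j * F i * F j).totalDegree ≤ d := by
      refine le_trans (totalDegree_sub _ _) (max_le (hdeg j) ?_)
      refine le_trans (totalDegree_finset_sum _ _) (Finset.sup_le fun i _ => ?_)
      by_cases hcond : dd i + dd j ≤ d
      · calc (a' i j * F i * F j).totalDegree
            ≤ (a' i j * F i).totalDegree + dd j := totalDegree_mul _ _
          _ ≤ (a' i j).totalDegree + dd i + dd j := by
              have h2 := totalDegree_mul (a' i j) (F i)
              have h3 : dd i = (F i).totalDegree := rfl
              omega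
          _ ≤ d := by
              have : (a' i j).totalDegree ≤ d - dd i - dd j := by
                rw [ha']
                simp only
                rw [if_pos hcond]
                exact totalDegree_hc_le _ _
              omega
      · have : a' i j = 0 := by rw [ha']; simp only; rw [if_neg hcond]
        rw [this, zero_mul, zero_mul, totalDegree_zero]
        omega
    have hcd : homogeneousComponent d (F j * G j - ∑ i, a' i j * F i * F j) = 0 := by
      rw [map_sub, hprod j, map_sum]
      have hterm : ∀ i, homogeneousComponent d (a' i j * F i * F j)
          = a' i j * (f i * f j) := by
        intro i
        by_cases hcond : dd i + dd j ≤ d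
        · have hFiFj : (F i * F j).totalDegree ≤ dd i + dd j := totalDegree_mul _ _
          have ha'deg : (a' i j).totalDegree ≤ d - (dd i + dd j) := by
            rw [ha']
            simp only
            rw [if_pos hcond]
            have := totalDegree_hc_le (a i j) (d - dd i - dd j)
            omega
          have key := hc_mul_top (a' i j) (F i * F j) (d - (dd i + dd j))
            (dd i + dd j) ha'deg hFiFj
          rw [show d - (dd i + dd j) + (dd i + dd j) = d from by omega] at key
          have e1 : homogeneousComponent (d - (dd i + dd j)) (a' i j) = a' i j := by
            have hhom : (a' i j).IsHomogeneous (d - (dd i + dd j)) := by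
              rw [ha']
              simp only
              rw [if_pos hcond, show d - (dd i + dd j) = d - dd i - dd j from by omega]
              exact homogeneousComponent_isHomogeneous _ _
            exact hc_self hhom
          have e2 : homogeneousComponent (dd i + dd j) (F i * F j) = f i * f j :=
            hc_mul_top (F i) (F j) (dd i) (dd j) le_rfl le_rfl
          rw [mul_assoc, key, e1, e2]
        · have h0 : a' i j = 0 := by rw [ha']; simp only; rw [if_neg hcond]
          rw [h0, zero_mul, zero_mul, map_zero, zero_mul]
      rw [Finset.sum_congr rfl fun i _ => hterm i]
      have : ∑ i, a' i j * (f i * f j) = f j * ∑ i, a' i j * f i := by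
        rw [Finset.mul_sum]
        exact Finset.sum_congr rfl fun i _ => by ring
      rw [this, ← hrep' j, sub_self]
    exact deg_drop _ d hd1 hdegle hcd



lemma main_ind (F : Fin n → R) (Φ : R)
    (hF1 : ∀ i, (F i).totalDegree = 0 → F i = 0)
    (hKos : ∀ h : Fin n → R,
      (∑ j, homogeneousComponent (F j).totalDegree (F j) * h j) = 0 →
      ∃ a : Fin n → Fin n → R, (∀ i j, a i j = - a j i) ∧
        ∀ j, h j = ∑ i, a i j * homogeneousComponent (F i).totalDegree (F i)) :
    ∀ d (G : Fin n → R), (∑ j, F j * G j = Φ) →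
      (∀ j, (F j * G j).totalDegree ≤ d) →
      ∃ G' : Fin n → MvPolynomial (Fin n) ℂ, (∑ j, F j * G' j = Φ) ∧
        ∀ j, (F j * G' j).totalDegree ≤ Φ.totalDegree := by
  intro d
  induction d with
  | zero => exact fun G hs hb => ⟨G, hs, fun j => le_trans (hb j) (Nat.zero_le _)⟩
  | succ d ih =>
    intro G hs hb
    by_cases hcmp : d + 1 ≤ Φ.totalDegree
    · exact ⟨G, hs, fun j => le_trans (hb j) hcmp⟩
    · have hd : Φ.totalDegree < d + 1 := by omega
      classical
      set G0 : Fin n → R := fun j => if F j * G j = 0 then 0 else G j with hG0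
      have hFG0 : ∀ j, F j * G0 j = F j * G j := by
        intro j
        rw [hG0]
        simp only
        by_cases h0 : F j * G j = 0
        · rw [if_pos h0, h0, mul_zero]
        · rw [if_neg h0]
      have hz : ∀ j, F j * G0 j = 0 → G0 j = 0 := by
        intro j h0
        rw [hFG0 j] at h0
        rw [hG0]
        simp only
        rw [if_pos h0]
      obtain ⟨G', hs', hb'⟩ := reduce_step F Φ hF1 hKos (d + 1) hd G0 hz
        (by rw [Finset.sum_congr rfl fun j _ => hFG0 j]; exact hs)
        (fun j => by rw [hFG0 j]; exact hb j)
      exact ih G' hs' fun j => by have := hb' j; omega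

/-- Max Nöther's AF+BG theorem.  Let F₁,…,Fₙ ∈ ℂ[z₁,…,zₙ] have finite common zero
set in ℂⁿ and suppose their homogenizations have no common zeros on the hyperplane
at infinity {z₀ = 0} in ℙⁿ.  If Φ ∈ (F₁,…,Fₙ) then there are Gⱼ with
Σ FⱼGⱼ = Φ and deg(FⱼGⱼ) ≤ deg Φ for every j. -/
theorem stmt10 (n : ℕ) (F : Fin n → MvPolynomial (Fin n) ℂ)
    (Φ : MvPolynomial (Fin n) ℂ)
    (hfin : {x : Fin n → ℂ | ∀ j, eval x (F j) = 0}.Finite)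
    (hinf : ∀ x : Fin (n + 1) → ℂ, x 0 = 0 →
      (∀ j, eval x (homogenize (F j)) = 0) → x = 0)
    (hΦ : Φ ∈ Ideal.span (Set.range F)) :
    ∃ G : Fin n → MvPolynomial (Fin n) ℂ,
      (∑ j, F j * G j) = Φ ∧ ∀ j, (F j * G j).totalDegree ≤ Φ.totalDegree := by
  classical
  by_cases hconst : ∃ j₀, F j₀ ≠ 0 ∧ (F j₀).totalDegree = 0
  · obtain ⟨j₀, hne, hdeg0⟩ := hconst
    set c : ℂ := coeff 0 (F j₀) with hcdef
    have hFC : F j₀ = C c := by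
      have hhom : (F j₀).IsHomogeneous 0 :=
        (totalDegree_zero_iff_isHomogeneous (σ := Fin n)).mp hdeg0
      calc F j₀ = homogeneousComponent 0 (F j₀) := by
            rw [homogeneousComponent_of_mem ((mem_homogeneousSubmodule _ _).mpr hhom),
              if_pos rfl]
        _ = C c := homogeneousComponent_zero _
    have hc0 : c ≠ 0 := fun h => hne (by rw [hFC, h, map_zero])
    refine ⟨fun j => if j = j₀ then C c⁻¹ * Φ else 0, ?_, ?_⟩
    · rw [Finset.sum_eq_single j₀]
      · simp only
        rw [if_true, hFC, ← mul_assoc, ← map_mul, mul_inv_cancel₀ hc0, map_one,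
          one_mul]
      · intro b _ hb
        simp only
        rw [if_neg hb, mul_zero]
      · intro habs
        exact absurd (Finset.mem_univ j₀) habs
    · intro j
      simp only
      by_cases hj : j = j₀
      · subst hj
        rw [if_pos rfl, hFC, ← mul_assoc, ← map_mul, mul_inv_cancel₀ hc0, map_one,
          one_mul]
      · rw [if_neg hj, mul_zero, totalDegree_zero]
        exact Nat.zero_le _
  · push_neg at hconst
    have hF1 : ∀ i, (F i).totalDegree = 0 → F i = 0 := by
      intro i h0
      by_contra hne
      exact hconst i hne h0
    set f : Fin n → MvPolynomial (Fin n) ℂ :=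
      fun j => homogeneousComponent (F j).totalDegree (F j) with hfdef
    have hV : ∀ x : Fin n → ℂ, (∀ j, eval x (f j) = 0) → x = 0 := by
      intro x hx
      have h0 : (Fin.cons 0 x : Fin (n + 1) → ℂ) = 0 := by
        apply hinf
        · exact Fin.cons_zero _ _
        · intro j
          rw [eval_homogenize_zero]
          exact hx j
      funext i
      have := congrFun h0 i.succ
      rwa [Fin.cons_succ] at this
    choose N hNmem using fun i => pow_mem_span_leading f hV i
    have hNfun : ∀ i : Fin n, ∃ r : Fin n → MvPolynomial (Fin n) ℂ,
        ∑ j, r j * f j = X i ^ N i := by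
      intro i
      obtain ⟨r, hr⟩ := (Submodule.mem_span_range_iff_exists_fun _).mp (hNmem i)
      exact ⟨r, by rw [← hr]; exact Finset.sum_congr rfl fun j _ => (smul_eq_mul _ _).symm⟩
    have hKos : ∀ h : Fin n → MvPolynomial (Fin n) ℂ,
        (∑ j, homogeneousComponent (F j).totalDegree (F j) * h j) = 0 →
        ∃ a : Fin n → Fin n → MvPolynomial (Fin n) ℂ, (∀ i j, a i j = - a j i) ∧
          ∀ j, h j = ∑ i, a i j *
            homogeneousComponent (F i).totalDegree (F i) :=
      fun h hs => koszul_syzygy f N hNfun h hs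
    obtain ⟨cc, hcc⟩ := (Submodule.mem_span_range_iff_exists_fun _).mp hΦ
    have hsum : ∑ j, F j * cc j = Φ := by
      rw [← hcc]
      exact Finset.sum_congr rfl fun j _ => by rw [smul_eq_mul, mul_comm]
    exact main_ind F Φ hF1 hKos
      (Finset.univ.sup fun j => (F j * cc j).totalDegree) cc hsum
      (fun j => Finset.le_sup (f := fun j => (F j * cc j).totalDegree) (Finset.mem_univ j))
end
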